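/- Let d be a positive integer and let h be a mixing density with ∫_0^∞ u^{d/2} h(u) du < ∞. Suppose h is polynomial near the origin with power c, i.e., h is strictly positive in a neighborhood of 0 and lim_{u→0+} h(u)/u^c exists in (0,∞), and suppose 2c + d > 0. Then for every λ > 1/(2c + d) there exists L ∈ ℝ such that for all s ≥ 0, ∫_0^∞ u^{(d-2)/2} e^{-su/2} h(u) du ≤ (λ s + L) · ∫_0^∞ u^{d/2} e^{-su/2} h(u) du. -/

import Mathlib

open MeasureTheory Set
open scoped ENNReal

/-- A mixing density: a Borel measurable function on `(0,∞)` (extended to all of `ℝ`),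
nonnegative on `(0,∞)`, integrating to 1 over `(0,∞)`. -/
def IsMixingDensity (h : ℝ → ℝ) : Prop :=
  Measurable h ∧ (∀ u ∈ Ioi (0:ℝ), 0 ≤ h u) ∧
    ∫⁻ u in Ioi (0:ℝ), ENNReal.ofReal (h u) = 1


private lemma gammaInt (a b : ℝ) (ha : 0 < a) (hb : 0 < b) :
    IntegrableOn (fun u : ℝ => u ^ (a - 1) * Real.exp (-(b * u))) (Ioi 0) := by
  have := integrableOn_rpow_mul_exp_neg_mul_rpow (show (-1:ℝ) < a - 1 by linarith) (zero_lt_one (α := ℝ)) hb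
  refine this.congr_fun (fun x hx => ?_) measurableSet_Ioi
  dsimp only; rw [Real.rpow_one, neg_mul]

private lemma gammaVal (a b : ℝ) (ha : 0 < a) (hb : 0 < b) :
    ∫ u in Ioi (0:ℝ), u ^ (a - 1) * Real.exp (-(b * u)) = (1 / b) ^ a * Real.Gamma a :=
  Real.integral_rpow_mul_exp_neg_mul_Ioi ha hb

private lemma gammaLint (a b : ℝ) (ha : 0 < a) (hb : 0 < b) :
    ∫⁻ u in Ioi (0:ℝ), ENNReal.ofReal (u ^ (a - 1) * Real.exp (-(b * u)))
      = ENNReal.ofReal ((1 / b) ^ a * Real.Gamma a) := by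
  rw [← gammaVal a b ha hb, ← ofReal_integral_eq_lintegral_ofReal (gammaInt a b ha hb)]
  filter_upwards [ae_restrict_mem measurableSet_Ioi] with x hx
  exact mul_nonneg (Real.rpow_nonneg (le_of_lt hx) _) (Real.exp_pos _).le

/-- variant with exp (-(s*u)/2) shape -/
private lemma gammaInt2 (a s : ℝ) (ha : 0 < a) (hs : 0 < s) :
    IntegrableOn (fun u : ℝ => u ^ (a - 1) * Real.exp (-(s * u) / 2)) (Ioi 0) := by
  refine (gammaInt a (s/2) ha (by positivity)).congr_fun (fun x hx => ?_) measurableSet_Ioi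
  dsimp only; rw [show -(s/2 * x) = -(s * x)/2 by ring]

private lemma gammaVal2 (a s : ℝ) (ha : 0 < a) (hs : 0 < s) :
    ∫ u in Ioi (0:ℝ), u ^ (a - 1) * Real.exp (-(s * u) / 2) = (2 / s) ^ a * Real.Gamma a := by
  rw [show (2:ℝ)/s = 1/(s/2) by rw [one_div_div], ← gammaVal a (s/2) ha (by positivity)]
  refine setIntegral_congr_fun measurableSet_Ioi (fun x hx => ?_)
  rw [show -(s/2 * x) = -(s * x)/2 by ring]

private lemma gammaLint2 (a s : ℝ) (ha : 0 < a) (hs : 0 < s) :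
    ∫⁻ u in Ioi (0:ℝ), ENNReal.ofReal (u ^ (a - 1) * Real.exp (-(s * u) / 2))
      = ENNReal.ofReal ((2 / s) ^ a * Real.Gamma a) := by
  rw [← gammaVal2 a s ha hs, ← ofReal_integral_eq_lintegral_ofReal (gammaInt2 a s ha hs)]
  filter_upwards [ae_restrict_mem measurableSet_Ioi] with x hx
  exact mul_nonneg (Real.rpow_nonneg (le_of_lt hx) _) (Real.exp_pos _).le

/-- quarter version -/
private lemma gammaVal4 (a s : ℝ) (ha : 0 < a) (hs : 0 < s) :
    ∫ u in Ioi (0:ℝ), u ^ (a - 1) * Real.exp (-(s * u) / 4) = (4 / s) ^ a * Real.Gamma a := by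
  rw [show (4:ℝ)/s = 1/(s/4) by rw [one_div_div], ← gammaVal a (s/4) ha (by positivity)]
  refine setIntegral_congr_fun measurableSet_Ioi (fun x hx => ?_)
  rw [show -(s/4 * x) = -(s * x)/4 by ring]

private lemma gammaInt4 (a s : ℝ) (ha : 0 < a) (hs : 0 < s) :
    IntegrableOn (fun u : ℝ => u ^ (a - 1) * Real.exp (-(s * u) / 4)) (Ioi 0) := by
  refine (gammaInt a (s/4) ha (by positivity)).congr_fun (fun x hx => ?_) measurableSet_Ioi
  dsimp only; rw [show -(s/4 * x) = -(s * x)/4 by ring]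

set_option maxHeartbeats 1000000 in
/-- If the mixing density `h` satisfies condition `M`, is polynomial near the origin with
power `c` (with `2c + d > 0`), then for every `λ > 1/(2c+d)` there is `L ∈ ℝ` with
`∫_0^∞ u^{(d-2)/2} e^{-su/2} h du ≤ (λ s + L) ∫_0^∞ u^{d/2} e^{-su/2} h du` for all `s ≥ 0`. -/
theorem polynomial_near_origin_drift_bound (d : ℕ) (hd : 0 < d) (h : ℝ → ℝ)
    (hmix : IsMixingDensity h)
    (hM : ∫⁻ u in Ioi (0:ℝ), ENNReal.ofReal (u ^ ((d : ℝ) / 2) * h u) < ⊤)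
    (c : ℝ) (hc : -1 < c)
    (hpos : ∃ ε > 0, ∀ u ∈ Ioo (0:ℝ) ε, 0 < h u)
    (hlim : ∃ L₀ : ℝ, 0 < L₀ ∧
      Filter.Tendsto (fun u => h u / u ^ c) (nhdsWithin 0 (Ioi (0:ℝ))) (nhds L₀))
    (hcd : 0 < 2 * c + d) :
    ∀ lam : ℝ, 1 / (2 * c + d) < lam → ∃ L : ℝ, ∀ s : ℝ, 0 ≤ s →
      (∫⁻ u in Ioi (0:ℝ),
          ENNReal.ofReal (u ^ (((d : ℝ) - 2) / 2) * Real.exp (-(s * u) / 2) * h u))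
        ≤ ENNReal.ofReal (lam * s + L) *
          ∫⁻ u in Ioi (0:ℝ),
            ENNReal.ofReal (u ^ ((d : ℝ) / 2) * Real.exp (-(s * u) / 2) * h u) := by
  obtain ⟨hmeas, hnn, -⟩ := hmix
  obtain ⟨L₀, hL₀, htend⟩ := hlim
  intro lam hlam
  have hcdR : (0:ℝ) < 2 * c + (d:ℝ) := hcd
  have hlam0 : 0 < lam := lt_trans (by positivity) hlam
  set r : ℝ := (d:ℝ)/2 with hrdef
  set q : ℝ := ((d:ℝ)-2)/2 with hqdef
  have hqr : q = r - 1 := by rw [hqdef, hrdef]; ring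
  set α : ℝ := c + r with hαdef
  have hα : 0 < α := by rw [hαdef, hrdef]; linarith
  have hα1 : 0 < α + 1 := by linarith
  have hΓα : 0 < Real.Gamma α := Real.Gamma_pos_of_pos hα
  have hΓα1 : Real.Gamma (α+1) = α * Real.Gamma α := Real.Gamma_add_one hα.ne'
  have hΓα1pos : 0 < Real.Gamma (α+1) := Real.Gamma_pos_of_pos hα1
  set R : ℝ := lam * (2*c + (d:ℝ)) with hRdef
  have hR : 1 < R := by rw [hRdef]; rw [div_lt_iff₀ hcdR] at hlam; linarith
  have hR0 : 0 < R := by linarith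
  set M : ℝ := (R+1)/2 with hMdef
  have hM1 : 1 < M := by rw [hMdef]; linarith
  set η : ℝ := (R-1)/(2*R) with hηdef
  have hη0 : 0 < η := by rw [hηdef]; exact div_pos (by linarith) (by linarith)
  have hη1 : η < 1 := by rw [hηdef, div_lt_one (by linarith)]; linarith
  have hRM : R * (1 - η) = M := by rw [hηdef, hMdef]; field_simp; ring
  set ρ : ℝ := (M-1)*L₀/(M+1) with hρdef
  have hρ0 : 0 < ρ := by
    rw [hρdef]; exact div_pos (mul_pos (by linarith) hL₀) (by linarith)
  have hρL : ρ < L₀ := by rw [hρdef, div_lt_iff₀ (by linarith)]; nlinarith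
  set K₀ : ℝ := L₀ - ρ with hK₀def
  set K₁ : ℝ := L₀ + ρ with hK₁def
  have hK₀ : 0 < K₀ := by rw [hK₀def]; linarith
  have hK₁ : 0 < K₁ := by rw [hK₁def]; linarith
  have hMK : M * K₀ = K₁ := by
    rw [hK₀def, hK₁def, hρdef]; field_simp; ring
  clear_value r q α R M η ρ K₀ K₁
  -- band near the origin
  have hev : {u : ℝ | h u / u ^ c ∈ Ioo K₀ K₁} ∈ nhdsWithin 0 (Ioi (0:ℝ)) :=
    htend (Ioo_mem_nhds (by rw [hK₀def]; linarith) (by rw [hK₁def]; linarith))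
  rw [mem_nhdsGT_iff_exists_Ioo_subset] at hev
  obtain ⟨ε, hεmem, hband⟩ := hev
  have hε : 0 < ε := hεmem
  have hlo : ∀ u ∈ Ioo (0:ℝ) ε, K₀ * u ^ c ≤ h u := by
    intro u hu
    have hu0 : 0 < u := hu.1
    have hcpos : 0 < u ^ c := Real.rpow_pos_of_pos hu0 c
    have hb := (hband hu).1
    calc K₀ * u^c ≤ (h u / u^c) * u^c := mul_le_mul_of_nonneg_right hb.le hcpos.le
    _ = h u := div_mul_cancel₀ _ hcpos.ne'
  have hup : ∀ u ∈ Ioo (0:ℝ) ε, h u ≤ K₁ * u ^ c := by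
    intro u hu
    have hu0 : 0 < u := hu.1
    have hcpos : 0 < u ^ c := Real.rpow_pos_of_pos hu0 c
    have hb := (hband hu).2
    calc h u = (h u / u^c) * u^c := (div_mul_cancel₀ _ hcpos.ne').symm
    _ ≤ K₁ * u^c := mul_le_mul_of_nonneg_right hb.le hcpos.le
  -- choice of S
  set S : ℝ := max 1 ((4/ε) * Real.log ((2:ℝ)^(α+1)/η)) with hSdef
  have hS1 : (1:ℝ) ≤ S := le_max_left _ _
  have hS0 : (0:ℝ) < S := lt_of_lt_of_le one_pos hS1
  have hC2 : (0:ℝ) < (2:ℝ)^(α+1) := Real.rpow_pos_of_pos two_pos _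
  clear_value S
  have hStail : ∀ s : ℝ, S ≤ s → Real.exp (-(s*ε)/4) * (2:ℝ)^(α+1) ≤ η := by
    intro s hs
    have h1 : (4/ε) * Real.log ((2:ℝ)^(α+1)/η) ≤ s := le_trans (le_max_right _ _) (le_trans (le_of_eq hSdef.symm) hs)
    have h2 : Real.log ((2:ℝ)^(α+1)/η) ≤ s*ε/4 := by
      have h3 := mul_le_mul_of_nonneg_right h1 (show (0:ℝ) ≤ ε/4 by positivity)
      calc Real.log ((2:ℝ)^(α+1)/η) = (4/ε)*Real.log ((2:ℝ)^(α+1)/η)*(ε/4) := by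
            field_simp
      _ ≤ s*(ε/4) := h3
      _ = s*ε/4 := by ring
    have h5 : (2:ℝ)^(α+1)/η ≤ Real.exp (s*ε/4) := by
      rw [← Real.exp_log (show (0:ℝ) < (2:ℝ)^(α+1)/η by positivity)]
      exact Real.exp_le_exp.mpr h2
    have h4 : Real.exp (-(s*ε)/4) ≤ η / (2:ℝ)^(α+1) := by
      rw [show -(s*ε)/4 = -(s*ε/4) by ring, Real.exp_neg]
      calc (Real.exp (s*ε/4))⁻¹ ≤ ((2:ℝ)^(α+1)/η)⁻¹ :=
            inv_anti₀ (by positivity) h5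
      _ = η/(2:ℝ)^(α+1) := by rw [inv_div]
    calc Real.exp (-(s*ε)/4) * (2:ℝ)^(α+1) ≤ (η/(2:ℝ)^(α+1))*(2:ℝ)^(α+1) :=
          mul_le_mul_of_nonneg_right h4 hC2.le
    _ = η := div_mul_cancel₀ _ hC2.ne'
  have hdisj : Disjoint (Ioo (0:ℝ) ε) (Ici ε) := by
    rw [Set.disjoint_left]
    intro x hx hx'
    exact absurd hx.2 (not_lt.mpr hx')
  have hIooIoi : Ioo (0:ℝ) ε ⊆ Ioi 0 := Ioo_subset_Ioi_self
  have hIciIoi : Ici ε ⊆ Ioi (0:ℝ) := fun x hx => lt_of_lt_of_le hε hx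
  -- split of the A-integral
  have hsplitA : ∀ s : ℝ,
      (∫⁻ u in Ioi (0:ℝ), ENNReal.ofReal (u ^ q * Real.exp (-(s * u) / 2) * h u))
        = (∫⁻ u in Ioo (0:ℝ) ε, ENNReal.ofReal (u ^ q * Real.exp (-(s * u) / 2) * h u))
          + ∫⁻ u in Ici ε, ENNReal.ofReal (u ^ q * Real.exp (-(s * u) / 2) * h u) := by
    intro s
    rw [← Ioo_union_Ici_eq_Ioi hε, lintegral_union measurableSet_Ici hdisj]
  -- tail bound for A
  have hAtail : ∀ s : ℝ,
      (∫⁻ u in Ici ε, ENNReal.ofReal (u ^ q * Real.exp (-(s * u) / 2) * h u))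
        ≤ ENNReal.ofReal ε⁻¹ *
          ∫⁻ u in Ioi (0:ℝ), ENNReal.ofReal (u ^ r * Real.exp (-(s * u) / 2) * h u) := by
    intro s
    have step1 : (∫⁻ u in Ici ε, ENNReal.ofReal (u ^ q * Real.exp (-(s * u) / 2) * h u))
        ≤ ∫⁻ u in Ici ε, ENNReal.ofReal ε⁻¹ * ENNReal.ofReal (u ^ r * Real.exp (-(s * u) / 2) * h u) := by
      refine setLIntegral_mono' measurableSet_Ici (fun u hu => ?_)
      have hu0 : 0 < u := lt_of_lt_of_le hε hu
      rw [← ENNReal.ofReal_mul (by positivity)]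
      refine ENNReal.ofReal_le_ofReal ?_
      have hq' : u ^ q = u ^ r * u⁻¹ := by
        rw [hqr, Real.rpow_sub hu0, Real.rpow_one, div_eq_mul_inv]
      have hinv : u⁻¹ ≤ ε⁻¹ := inv_anti₀ hε hu
      have hh := hnn u hu0
      calc u ^ q * Real.exp (-(s*u)/2) * h u
          = (u ^ r * Real.exp (-(s*u)/2) * h u) * u⁻¹ := by rw [hq']; ring
      _ ≤ (u ^ r * Real.exp (-(s*u)/2) * h u) * ε⁻¹ := by
            refine mul_le_mul_of_nonneg_left hinv ?_
            exact mul_nonneg (mul_nonneg (Real.rpow_nonneg hu0.le _) (Real.exp_pos _).le) hh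
      _ = ε⁻¹ * (u ^ r * Real.exp (-(s*u)/2) * h u) := by ring
    calc (∫⁻ u in Ici ε, ENNReal.ofReal (u ^ q * Real.exp (-(s * u) / 2) * h u))
        ≤ ∫⁻ u in Ici ε, ENNReal.ofReal ε⁻¹ * ENNReal.ofReal (u ^ r * Real.exp (-(s * u) / 2) * h u) := step1
    _ = ENNReal.ofReal ε⁻¹ * ∫⁻ u in Ici ε, ENNReal.ofReal (u ^ r * Real.exp (-(s * u) / 2) * h u) :=
          lintegral_const_mul' _ _ ENNReal.ofReal_ne_top
    _ ≤ ENNReal.ofReal ε⁻¹ * ∫⁻ u in Ioi (0:ℝ), ENNReal.ofReal (u ^ r * Real.exp (-(s * u) / 2) * h u) :=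
          mul_le_mul_right (lintegral_mono' (Measure.restrict_mono hIciIoi le_rfl) le_rfl) _
  -- head bound for A
  have hAhead : ∀ s : ℝ, 0 < s →
      (∫⁻ u in Ioo (0:ℝ) ε, ENNReal.ofReal (u ^ q * Real.exp (-(s * u) / 2) * h u))
        ≤ ENNReal.ofReal (K₁ * ((2/s)^α * Real.Gamma α)) := by
    intro s hs
    have step1 : (∫⁻ u in Ioo (0:ℝ) ε, ENNReal.ofReal (u ^ q * Real.exp (-(s * u) / 2) * h u))
        ≤ ∫⁻ u in Ioo (0:ℝ) ε, ENNReal.ofReal K₁ * ENNReal.ofReal (u ^ (α-1) * Real.exp (-(s * u) / 2)) := by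
      refine setLIntegral_mono' measurableSet_Ioo (fun u hu => ?_)
      have hu0 : 0 < u := hu.1
      rw [← ENNReal.ofReal_mul hK₁.le]
      refine ENNReal.ofReal_le_ofReal ?_
      have hα' : u ^ (α-1) = u ^ q * u ^ c := by
        rw [show α - 1 = q + c by rw [hαdef, hqr]; ring, Real.rpow_add hu0]
      calc u ^ q * Real.exp (-(s*u)/2) * h u
          ≤ u ^ q * Real.exp (-(s*u)/2) * (K₁ * u ^ c) := by
            refine mul_le_mul_of_nonneg_left (hup u hu) ?_
            exact mul_nonneg (Real.rpow_nonneg hu0.le _) (Real.exp_pos _).le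
      _ = K₁ * (u ^ (α-1) * Real.exp (-(s*u)/2)) := by rw [hα']; ring
    calc (∫⁻ u in Ioo (0:ℝ) ε, ENNReal.ofReal (u ^ q * Real.exp (-(s * u) / 2) * h u))
        ≤ ∫⁻ u in Ioo (0:ℝ) ε, ENNReal.ofReal K₁ * ENNReal.ofReal (u ^ (α-1) * Real.exp (-(s * u) / 2)) := step1
    _ = ENNReal.ofReal K₁ * ∫⁻ u in Ioo (0:ℝ) ε, ENNReal.ofReal (u ^ (α-1) * Real.exp (-(s * u) / 2)) :=
          lintegral_const_mul' _ _ ENNReal.ofReal_ne_top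
    _ ≤ ENNReal.ofReal K₁ * ∫⁻ u in Ioi (0:ℝ), ENNReal.ofReal (u ^ (α-1) * Real.exp (-(s * u) / 2)) :=
          mul_le_mul_right (lintegral_mono' (Measure.restrict_mono hIooIoi le_rfl) le_rfl) _
    _ = ENNReal.ofReal K₁ * ENNReal.ofReal ((2/s)^α * Real.Gamma α) := by
          rw [gammaLint2 α s hα hs]
    _ = ENNReal.ofReal (K₁ * ((2/s)^α * Real.Gamma α)) := (ENNReal.ofReal_mul hK₁.le).symm
  -- lower bound for the head of the B-type gamma integral (real version)
  have hBheadR : ∀ s : ℝ, S ≤ s →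
      (1-η) * ((2/s)^(α+1) * Real.Gamma (α+1)) ≤ ∫ u in Ioo (0:ℝ) ε, u ^ α * Real.exp (-(s * u) / 2) := by
    intro s hs
    have hs0 : 0 < s := lt_of_lt_of_le hS0 hs
    have hfint : IntegrableOn (fun u : ℝ => u ^ α * Real.exp (-(s * u) / 2)) (Ioi 0) := by
      have := gammaInt2 (α+1) s hα1 hs0
      simpa using this
    have hgint : IntegrableOn (fun u : ℝ => u ^ α * Real.exp (-(s * u) / 4)) (Ioi 0) := by
      have := gammaInt4 (α+1) s hα1 hs0
      simpa using this
    have hfull : ∫ u in Ioi (0:ℝ), u ^ α * Real.exp (-(s * u) / 2) = (2/s)^(α+1) * Real.Gamma (α+1) := by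
      have := gammaVal2 (α+1) s hα1 hs0
      simpa using this
    have hgfull : ∫ u in Ioi (0:ℝ), u ^ α * Real.exp (-(s * u) / 4) = (4/s)^(α+1) * Real.Gamma (α+1) := by
      have := gammaVal4 (α+1) s hα1 hs0
      simpa using this
    have hsplit : ∫ u in Ioi (0:ℝ), u ^ α * Real.exp (-(s * u) / 2)
        = (∫ u in Ioo (0:ℝ) ε, u ^ α * Real.exp (-(s * u) / 2))
          + ∫ u in Ici ε, u ^ α * Real.exp (-(s * u) / 2) := by
      rw [← Ioo_union_Ici_eq_Ioi hε]
      exact setIntegral_union hdisj measurableSet_Ici (hfint.mono_set hIooIoi) (hfint.mono_set hIciIoi)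
    have htailb : ∫ u in Ici ε, u ^ α * Real.exp (-(s * u) / 2)
        ≤ Real.exp (-(s*ε)/4) * ((4/s)^(α+1) * Real.Gamma (α+1)) := by
      have hptw : ∀ u ∈ Ici ε, u ^ α * Real.exp (-(s * u) / 2)
          ≤ Real.exp (-(s*ε)/4) * (u ^ α * Real.exp (-(s * u) / 4)) := by
        intro u hu
        have hu0 : 0 < u := lt_of_lt_of_le hε hu
        have hexp2 : Real.exp (-(s*u)/2) = Real.exp (-(s*u)/4) * Real.exp (-(s*u)/4) := by
          rw [← Real.exp_add]; ring_nf
        have hle : Real.exp (-(s*u)/4) ≤ Real.exp (-(s*ε)/4) := by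
          refine Real.exp_le_exp.mpr ?_
          have : s*ε ≤ s*u := mul_le_mul_of_nonneg_left hu hs0.le
          linarith
        calc u ^ α * Real.exp (-(s*u)/2)
            = Real.exp (-(s*u)/4) * (u ^ α * Real.exp (-(s*u)/4)) := by rw [hexp2]; ring
        _ ≤ Real.exp (-(s*ε)/4) * (u ^ α * Real.exp (-(s*u)/4)) := by
              refine mul_le_mul_of_nonneg_right hle ?_
              exact mul_nonneg (Real.rpow_nonneg hu0.le _) (Real.exp_pos _).le
      calc ∫ u in Ici ε, u ^ α * Real.exp (-(s * u) / 2)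
          ≤ ∫ u in Ici ε, Real.exp (-(s*ε)/4) * (u ^ α * Real.exp (-(s * u) / 4)) :=
            setIntegral_mono_on (hfint.mono_set hIciIoi) ((hgint.mono_set hIciIoi).const_mul _)
              measurableSet_Ici hptw
      _ = Real.exp (-(s*ε)/4) * ∫ u in Ici ε, u ^ α * Real.exp (-(s * u) / 4) := by
            rw [MeasureTheory.integral_const_mul]
      _ ≤ Real.exp (-(s*ε)/4) * ∫ u in Ioi (0:ℝ), u ^ α * Real.exp (-(s * u) / 4) := by
            refine mul_le_mul_of_nonneg_left ?_ (Real.exp_pos _).le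
            refine setIntegral_mono_set hgint ?_ (HasSubset.Subset.eventuallyLE hIciIoi)
            filter_upwards [ae_restrict_mem measurableSet_Ioi] with x hx
            exact mul_nonneg (Real.rpow_nonneg (le_of_lt hx) _) (Real.exp_pos _).le
      _ = Real.exp (-(s*ε)/4) * ((4/s)^(α+1) * Real.Gamma (α+1)) := by rw [hgfull]
    have h45 : Real.exp (-(s*ε)/4) * ((4/s)^(α+1) * Real.Gamma (α+1))
        ≤ η * ((2/s)^(α+1) * Real.Gamma (α+1)) := by
      have h4s : ((4:ℝ)/s)^(α+1) = (2:ℝ)^(α+1) * (2/s)^(α+1) := by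
        rw [show (4:ℝ)/s = 2*(2/s) by ring, Real.mul_rpow (by norm_num) (by positivity)]
      rw [h4s]
      have hX : (0:ℝ) ≤ (2/s)^(α+1) * Real.Gamma (α+1) := by positivity
      nlinarith [mul_le_mul_of_nonneg_right (hStail s hs) hX]
    have hheadeq : (∫ u in Ioo (0:ℝ) ε, u ^ α * Real.exp (-(s * u) / 2))
        = (2/s)^(α+1) * Real.Gamma (α+1) - ∫ u in Ici ε, u ^ α * Real.exp (-(s * u) / 2) := by
      rw [hsplit] at hfull; linarith
    rw [hheadeq]
    linarith
  -- lower bound for B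
  have hBlow : ∀ s : ℝ, S ≤ s →
      ENNReal.ofReal (K₀ * ((1-η) * ((2/s)^(α+1) * Real.Gamma (α+1))))
        ≤ ∫⁻ u in Ioi (0:ℝ), ENNReal.ofReal (u ^ r * Real.exp (-(s * u) / 2) * h u) := by
    intro s hs
    have hs0 : 0 < s := lt_of_lt_of_le hS0 hs
    have hfint : IntegrableOn (fun u : ℝ => u ^ α * Real.exp (-(s * u) / 2)) (Ioi 0) := by
      have := gammaInt2 (α+1) s hα1 hs0
      simpa using this
    have hofr : (∫⁻ u in Ioo (0:ℝ) ε, ENNReal.ofReal (u ^ α * Real.exp (-(s * u) / 2)))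
        = ENNReal.ofReal (∫ u in Ioo (0:ℝ) ε, u ^ α * Real.exp (-(s * u) / 2)) := by
      rw [← ofReal_integral_eq_lintegral_ofReal (hfint.mono_set hIooIoi)]
      filter_upwards [ae_restrict_mem measurableSet_Ioo] with x hx
      exact mul_nonneg (Real.rpow_nonneg (le_of_lt hx.1) _) (Real.exp_pos _).le
    calc ENNReal.ofReal (K₀ * ((1-η) * ((2/s)^(α+1) * Real.Gamma (α+1))))
        = ENNReal.ofReal K₀ * ENNReal.ofReal ((1-η) * ((2/s)^(α+1) * Real.Gamma (α+1))) :=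
          ENNReal.ofReal_mul hK₀.le
    _ ≤ ENNReal.ofReal K₀ * ∫⁻ u in Ioo (0:ℝ) ε, ENNReal.ofReal (u ^ α * Real.exp (-(s * u) / 2)) := by
          refine mul_le_mul_right ?_ _
          rw [hofr]
          exact ENNReal.ofReal_le_ofReal (hBheadR s hs)
    _ = ∫⁻ u in Ioo (0:ℝ) ε, ENNReal.ofReal K₀ * ENNReal.ofReal (u ^ α * Real.exp (-(s * u) / 2)) :=
          (lintegral_const_mul' _ _ ENNReal.ofReal_ne_top).symm
    _ ≤ ∫⁻ u in Ioo (0:ℝ) ε, ENNReal.ofReal (u ^ r * Real.exp (-(s * u) / 2) * h u) := by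
          refine setLIntegral_mono' measurableSet_Ioo (fun u hu => ?_)
          have hu0 : 0 < u := hu.1
          rw [← ENNReal.ofReal_mul hK₀.le]
          refine ENNReal.ofReal_le_ofReal ?_
          have hα' : u ^ α = u ^ c * u ^ r := by
            rw [hαdef, Real.rpow_add hu0]
          calc K₀ * (u ^ α * Real.exp (-(s*u)/2))
              = (K₀ * u ^ c) * (u ^ r * Real.exp (-(s*u)/2)) := by rw [hα']; ring
          _ ≤ h u * (u ^ r * Real.exp (-(s*u)/2)) := by
                refine mul_le_mul_of_nonneg_right (hlo u hu) ?_
                exact mul_nonneg (Real.rpow_nonneg hu0.le _) (Real.exp_pos _).le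
          _ = u ^ r * Real.exp (-(s*u)/2) * h u := by ring
    _ ≤ ∫⁻ u in Ioi (0:ℝ), ENNReal.ofReal (u ^ r * Real.exp (-(s * u) / 2) * h u) :=
          lintegral_mono' (Measure.restrict_mono hIooIoi le_rfl) le_rfl
  -- monotonicity in s
  have hmono : ∀ (p : ℝ) (s₁ s₂ : ℝ), 0 ≤ s₁ → s₁ ≤ s₂ →
      (∫⁻ u in Ioi (0:ℝ), ENNReal.ofReal (u ^ p * Real.exp (-(s₂ * u) / 2) * h u))
        ≤ ∫⁻ u in Ioi (0:ℝ), ENNReal.ofReal (u ^ p * Real.exp (-(s₁ * u) / 2) * h u) := by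
    intro p s₁ s₂ hs₁ h12
    refine setLIntegral_mono' measurableSet_Ioi (fun u hu => ?_)
    have hu0 : 0 < u := hu
    refine ENNReal.ofReal_le_ofReal ?_
    have he : Real.exp (-(s₂*u)/2) ≤ Real.exp (-(s₁*u)/2) := by
      refine Real.exp_le_exp.mpr ?_
      have : s₁*u ≤ s₂*u := mul_le_mul_of_nonneg_right h12 hu0.le
      linarith
    exact mul_le_mul_of_nonneg_right
      (mul_le_mul_of_nonneg_left he (Real.rpow_nonneg hu0.le p)) (hnn u hu0)
  -- finiteness of A at s = 0
  have hB0 : (∫⁻ u in Ioi (0:ℝ), ENNReal.ofReal (u ^ r * Real.exp (-((0:ℝ) * u) / 2) * h u)) < ⊤ := by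
    have heq : ∀ u : ℝ, u ^ r * Real.exp (-((0:ℝ) * u) / 2) * h u = u ^ r * h u := by
      intro u; simp
    simp only [heq]
    exact hM
  have hfin0 : (∫⁻ u in Ioi (0:ℝ), ENNReal.ofReal (u ^ q * Real.exp (-((0:ℝ) * u) / 2) * h u)) < ⊤ := by
    rw [hsplitA 0]
    refine ENNReal.add_lt_top.mpr ⟨?_, ?_⟩
    · -- head finite
      have hint : IntegrableOn (fun u : ℝ => u ^ (α-1)) (Ioo 0 ε) := by
        have := intervalIntegral.intervalIntegrable_rpow' (show (-1:ℝ) < α-1 by linarith)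
          (a := 0) (b := ε)
        rwa [intervalIntegrable_iff_integrableOn_Ioo_of_le hε.le] at this
      have hbound : (∫⁻ u in Ioo (0:ℝ) ε, ENNReal.ofReal (u ^ q * Real.exp (-((0:ℝ) * u) / 2) * h u))
          ≤ ENNReal.ofReal K₁ * ∫⁻ u in Ioo (0:ℝ) ε, ENNReal.ofReal (u ^ (α-1)) := by
        rw [← lintegral_const_mul' _ _ ENNReal.ofReal_ne_top]
        refine setLIntegral_mono' measurableSet_Ioo (fun u hu => ?_)
        have hu0 : 0 < u := hu.1
        rw [← ENNReal.ofReal_mul hK₁.le]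
        refine ENNReal.ofReal_le_ofReal ?_
        have hα' : u ^ (α-1) = u ^ q * u ^ c := by
          rw [show α - 1 = q + c by rw [hαdef, hqr]; ring, Real.rpow_add hu0]
        have : Real.exp (-((0:ℝ)*u)/2) = 1 := by simp
        calc u ^ q * Real.exp (-((0:ℝ)*u)/2) * h u = u ^ q * h u := by rw [this]; ring
        _ ≤ u ^ q * (K₁ * u ^ c) := by
              refine mul_le_mul_of_nonneg_left (hup u hu) (Real.rpow_nonneg hu0.le _)
        _ = K₁ * u ^ (α-1) := by rw [hα']; ring
      refine lt_of_le_of_lt hbound (ENNReal.mul_lt_top ENNReal.ofReal_lt_top ?_)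
      have : (∫⁻ u in Ioo (0:ℝ) ε, ENNReal.ofReal (u ^ (α-1)))
          = ENNReal.ofReal (∫ u in Ioo (0:ℝ) ε, u ^ (α-1)) := by
        rw [← ofReal_integral_eq_lintegral_ofReal hint]
        filter_upwards [ae_restrict_mem measurableSet_Ioo] with x hx
        exact Real.rpow_nonneg (le_of_lt hx.1) _
      rw [this]
      exact ENNReal.ofReal_lt_top
    · exact lt_of_le_of_lt (hAtail 0) (ENNReal.mul_lt_top ENNReal.ofReal_lt_top hB0)
  set A0real : ℝ := (∫⁻ u in Ioi (0:ℝ), ENNReal.ofReal (u ^ q * Real.exp (-((0:ℝ) * u) / 2) * h u)).toReal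
    with hA0def
  have hA0nn : 0 ≤ A0real := by rw [hA0def]; exact ENNReal.toReal_nonneg
  have hA0eq : (∫⁻ u in Ioi (0:ℝ), ENNReal.ofReal (u ^ q * Real.exp (-((0:ℝ) * u) / 2) * h u))
      = ENNReal.ofReal A0real := by rw [hA0def]; exact (ENNReal.ofReal_toReal hfin0.ne).symm
  clear_value A0real
  set BS : ℝ := K₀ * ((1-η) * ((2/S)^(α+1) * Real.Gamma (α+1))) with hBSdef
  have hBS : 0 < BS := by
    rw [hBSdef]
    have h2S : (0:ℝ) < (2/S)^(α+1) := Real.rpow_pos_of_pos (by positivity) _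
    exact mul_pos hK₀ (mul_pos (by linarith) (mul_pos h2S hΓα1pos))
  refine ⟨ε⁻¹ + A0real / BS, fun s hs0 => ?_⟩
  have hεinv : (0:ℝ) ≤ ε⁻¹ := by positivity
  have hdiv : (0:ℝ) ≤ A0real / BS := div_nonneg hA0nn hBS.le
  have hlams : (0:ℝ) ≤ lam * s := mul_nonneg hlam0.le hs0
  rcases le_total s S with hsS | hSs
  · -- small s
    calc (∫⁻ u in Ioi (0:ℝ), ENNReal.ofReal (u ^ q * Real.exp (-(s * u) / 2) * h u))
        ≤ ∫⁻ u in Ioi (0:ℝ), ENNReal.ofReal (u ^ q * Real.exp (-((0:ℝ) * u) / 2) * h u) :=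
          hmono q 0 s le_rfl hs0
    _ = ENNReal.ofReal A0real := hA0eq
    _ ≤ ENNReal.ofReal (A0real / BS) * ENNReal.ofReal BS := by
          rw [← ENNReal.ofReal_mul hdiv, div_mul_cancel₀ _ hBS.ne']
    _ ≤ ENNReal.ofReal (lam * s + (ε⁻¹ + A0real / BS)) *
          ∫⁻ u in Ioi (0:ℝ), ENNReal.ofReal (u ^ r * Real.exp (-(s * u) / 2) * h u) := by
          refine mul_le_mul' (ENNReal.ofReal_le_ofReal (by linarith)) ?_
          exact le_trans (hBlow S le_rfl) (hmono r s S hs0 hsS)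
  · -- large s
    have hs0' : 0 < s := lt_of_lt_of_le hS0 hSs
    have hkey : K₁ * ((2/s)^α * Real.Gamma α)
        = lam * s * (K₀ * ((1-η) * ((2/s)^(α+1) * Real.Gamma (α+1)))) := by
      rw [hΓα1, show ((2:ℝ)/s)^(α+1) = (2/s)^α * (2/s) from Real.rpow_add_one (by positivity) α]
      rw [← hMK, ← hRM, hRdef, hαdef, hrdef]
      field_simp
    have step5 : ENNReal.ofReal (K₁ * ((2/s)^α * Real.Gamma α))
        ≤ ENNReal.ofReal (lam * s) *
          ∫⁻ u in Ioi (0:ℝ), ENNReal.ofReal (u ^ r * Real.exp (-(s * u) / 2) * h u) := by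
      calc ENNReal.ofReal (K₁ * ((2/s)^α * Real.Gamma α))
          = ENNReal.ofReal (lam * s) * ENNReal.ofReal (K₀ * ((1-η) * ((2/s)^(α+1) * Real.Gamma (α+1)))) := by
            rw [← ENNReal.ofReal_mul hlams, ← hkey]
      _ ≤ _ := mul_le_mul_right (hBlow s hSs) _
    calc (∫⁻ u in Ioi (0:ℝ), ENNReal.ofReal (u ^ q * Real.exp (-(s * u) / 2) * h u))
        = (∫⁻ u in Ioo (0:ℝ) ε, ENNReal.ofReal (u ^ q * Real.exp (-(s * u) / 2) * h u))
          + ∫⁻ u in Ici ε, ENNReal.ofReal (u ^ q * Real.exp (-(s * u) / 2) * h u) := hsplitA s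
    _ ≤ ENNReal.ofReal (K₁ * ((2/s)^α * Real.Gamma α))
          + ENNReal.ofReal ε⁻¹ *
            ∫⁻ u in Ioi (0:ℝ), ENNReal.ofReal (u ^ r * Real.exp (-(s * u) / 2) * h u) :=
          add_le_add (hAhead s hs0') (hAtail s)
    _ ≤ ENNReal.ofReal (lam * s) *
            (∫⁻ u in Ioi (0:ℝ), ENNReal.ofReal (u ^ r * Real.exp (-(s * u) / 2) * h u))
          + ENNReal.ofReal ε⁻¹ *
            ∫⁻ u in Ioi (0:ℝ), ENNReal.ofReal (u ^ r * Real.exp (-(s * u) / 2) * h u) :=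
          add_le_add_left step5 _
    _ = ENNReal.ofReal (lam * s + ε⁻¹) *
            ∫⁻ u in Ioi (0:ℝ), ENNReal.ofReal (u ^ r * Real.exp (-(s * u) / 2) * h u) := by
          rw [ENNReal.ofReal_add hlams hεinv, add_mul]
    _ ≤ ENNReal.ofReal (lam * s + (ε⁻¹ + A0real / BS)) *
            ∫⁻ u in Ioi (0:ℝ), ENNReal.ofReal (u ^ r * Real.exp (-(s * u) / 2) * h u) :=
          mul_le_mul_left (ENNReal.ofReal_le_ofReal (by linarith)) _
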